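/- For every positive integer n and every integer i, the ℤ[U]-module map D⁺_{n,i} : 𝔸⁺_i → 𝔹⁺_i is surjective. (This is the computation of the mapping-cone complex of the unknot: it shows H_*(Cone(D⁺_{n,i})) is isomorphic to the kernel of D⁺_{n,i}.) -/

import Mathlib

noncomputable section

/-- The `ℤ[U]`-module `T = ℤ[U,U⁻¹]/(U·ℤ[U])`, modelled as finitely supported functions
`ℕ →₀ ℤ`, where the value at `j` is the coefficient of `U^{-j}`. -/
abbrev TT : Type := ℕ →₀ ℤ

/-- The action of `U` on `T` : `U·U^{-j} = U^{-(j-1)}` for `j ≥ 1` and `U·U^0 = 0`. -/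
def UT : AddMonoid.End TT :=
  Finsupp.liftAddHom fun j => if j = 0 then 0 else Finsupp.singleAddHom (j - 1)

/-- The map `v_s : T → T`: the identity if `s ≥ 0`, multiplication by `U^{-s}` if `s ≤ 0`. -/
def vT (s : ℤ) : AddMonoid.End TT := if 0 ≤ s then 1 else UT ^ (-s).toNat

/-- The map `h_s : T → T`: multiplication by `U^{s}` if `s ≥ 0`, the identity if `s ≤ 0`. -/
def hT (s : ℤ) : AddMonoid.End TT := if 0 ≤ s then UT ^ s.toNat else 1

/-- The index set of integers congruent to `i` modulo `n`. -/
def Idx (n i : ℤ) : Type := {s : ℤ // n ∣ s - i}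

instance (n i : ℤ) : DecidableEq (Idx n i) := Subtype.instDecidableEq

/-- `𝔸⁺_i = 𝔹⁺_i = ⊕_{s ≡ i (mod n)} T_s`. -/
abbrev ABt (n i : ℤ) : Type := Π₀ _ : Idx n i, TT

/-- Shifting the index by `n`. -/
def idxAdd (n i : ℤ) (s : Idx n i) : Idx n i :=
  ⟨s.1 + n, by obtain ⟨c, hc⟩ := s.2; exact ⟨c + 1, by rw [show s.1 + n - i = s.1 - i + n by ring, hc]; ring⟩⟩

/-- Shifting the index by `-n`. -/
def idxSub (n i : ℤ) (s : Idx n i) : Idx n i :=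
  ⟨s.1 - n, by obtain ⟨c, hc⟩ := s.2; exact ⟨c - 1, by rw [show s.1 - n - i = s.1 - i - n by ring, hc]; ring⟩⟩

/-- The map `D⁺_{n,i} : 𝔸⁺_i → 𝔹⁺_i`, `(D⁺_{n,i} a)_s = v_s(a_s) + h_{s-n}(a_{s-n})`. -/
def Dpos (n i : ℤ) : ABt n i →+ ABt n i :=
  DFinsupp.sumAddHom fun s =>
    ((DFinsupp.singleAddHom (fun _ : Idx n i => TT) s).comp (vT s.1)) +
    ((DFinsupp.singleAddHom (fun _ : Idx n i => TT) (idxAdd n i s)).comp (hT s.1))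

/-- The map `D⁺_{-n,i} : 𝔸⁺_i → 𝔹⁺_i`, `(D⁺_{-n,i} a)_s = v_s(a_s) + h_{s+n}(a_{s+n})`. -/
def Dneg (n i : ℤ) : ABt n i →+ ABt n i :=
  DFinsupp.sumAddHom fun s =>
    ((DFinsupp.singleAddHom (fun _ : Idx n i => TT) s).comp (vT s.1)) +
    ((DFinsupp.singleAddHom (fun _ : Idx n i => TT) (idxSub n i s)).comp (hT s.1))

/-- The `U`-action on `𝔸⁺_i = 𝔹⁺_i`, acting as `U` on each summand. -/
def UAB (n i : ℤ) : AddMonoid.End (ABt n i) :=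
  DFinsupp.sumAddHom fun s => (DFinsupp.singleAddHom (fun _ : Idx n i => TT) s).comp UT

/-- `ε(s,n)` for `n > 0`: writing `s = σ + kn` with `0 ≤ σ < n`,
`ε(s,n) = kσ + k(k-1)n/2` for `k ≥ 0` and `(k+1)σ + k(k+1)n/2` for `k < 0`. -/
def epsZ (s n : ℤ) : ℤ :=
  if 0 ≤ s.ediv n then
    s.ediv n * s.emod n + (s.ediv n * (s.ediv n - 1)).ediv 2 * n
  else
    (s.ediv n + 1) * s.emod n + (s.ediv n * (s.ediv n + 1)).ediv 2 * n

lemma UT_single (j : ℕ) (m : ℤ) :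
    UT (Finsupp.single j m) = if j = 0 then 0 else Finsupp.single (j - 1) m := by
  show ((Finsupp.liftAddHom fun j : ℕ => if j = 0 then (0 : ℤ →+ TT) else Finsupp.singleAddHom (j - 1)) : TT →+ TT) (Finsupp.single j m) = _
  rw [Finsupp.liftAddHom_apply_single]
  split <;> simp

/-- Section of `UT`: shift up by one. -/
def STT : TT →+ TT := Finsupp.mapDomain.addMonoidHom (· + 1)

lemma UT_STT (t : TT) : UT (STT t) = t := by
  induction t using Finsupp.induction with
  | zero => simp
  | single_add a b f _ _ ih =>
    rw [map_add, map_add, ih, STT, Finsupp.mapDomain.addMonoidHom_apply,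
      Finsupp.mapDomain_single, UT_single]
    simp

lemma pow_apply_pow (f : AddMonoid.End TT) (a b : ℕ) (x : TT) :
    (f ^ a) ((f ^ b) x) = (f ^ (a + b)) x := by
  rw [pow_add]; rfl

lemma UTpow_surj (k : ℕ) : Function.Surjective (UT ^ k : AddMonoid.End TT) := by
  induction k with
  | zero => intro t; exact ⟨t, by simp⟩
  | succ k ih =>
    intro t
    obtain ⟨a, ha⟩ := ih t
    refine ⟨STT a, ?_⟩
    rw [pow_succ]
    show (UT ^ k) (UT (STT a)) = t
    rw [UT_STT, ha]

lemma UTpow_single (a : ℕ) (b : ℤ) : (UT ^ (a + 1)) (Finsupp.single a b) = 0 := by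
  induction a with
  | zero => rw [pow_one, UT_single]; simp
  | succ a ih =>
    rw [pow_succ]
    show (UT ^ (a + 1)) (UT (Finsupp.single (a + 1) b)) = 0
    rw [UT_single]
    simpa using ih

lemma UT_nilpotent (t : TT) : ∃ N, ∀ M, N ≤ M → (UT ^ M) t = 0 := by
  induction t using Finsupp.induction with
  | zero => exact ⟨0, fun M _ => map_zero _⟩
  | single_add a b f _ _ ih =>
    obtain ⟨N, hN⟩ := ih
    refine ⟨max (a + 1) N, fun M hM => ?_⟩
    rw [map_add, hN M (le_trans (le_max_right _ _) hM)]
    have h1 : M = (M - (a + 1)) + (a + 1) := by omega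
    rw [h1, ← pow_apply_pow UT (M - (a + 1)) (a + 1), UTpow_single, map_zero, add_zero]

lemma Dpos_single (n i : ℤ) (s : Idx n i) (a : TT) :
    Dpos n i (DFinsupp.single s a) =
      DFinsupp.single s (vT s.1 a) + DFinsupp.single (idxAdd n i s) (hT s.1 a) := by
  rw [Dpos, DFinsupp.sumAddHom_single]
  rfl

lemma mem_range_pos (n i : ℤ) (hn : 0 < n) (N : ℕ) (s : Idx n i) (t : TT)
    (hs : 1 ≤ s.1) (ht : (UT ^ N) t = 0) :
    DFinsupp.single s t ∈ (Dpos n i).range := by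
  induction N generalizing s t with
  | zero =>
    rw [pow_zero] at ht
    have : t = 0 := ht
    rw [this, DFinsupp.single_zero]
    exact zero_mem _
  | succ N ih =>
    have hv : vT s.1 = 1 := if_pos (by linarith)
    have key : DFinsupp.single s t
        = Dpos n i (DFinsupp.single s t) - DFinsupp.single (idxAdd n i s) (hT s.1 t) := by
      rw [Dpos_single, hv, AddMonoid.End.one_apply, add_sub_cancel_right]
    rw [key]
    refine sub_mem (AddMonoidHom.mem_range.mpr ⟨_, rfl⟩) (ih (idxAdd n i s) _ ?_ ?_)
    · show 1 ≤ s.1 + n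
      linarith
    · have hh : hT s.1 = UT ^ s.1.toNat := if_pos (by linarith)
      rw [hh, pow_apply_pow]
      have h1 : N + s.1.toNat = (s.1.toNat - 1) + (N + 1) := by omega
      rw [h1, ← pow_apply_pow UT (s.1.toNat - 1) (N + 1), ht, map_zero]

lemma mem_range_nonneg (n i : ℤ) (hn : 0 < n) (s : Idx n i) (t : TT)
    (hs : 0 ≤ s.1) : DFinsupp.single s t ∈ (Dpos n i).range := by
  obtain ⟨N, hN⟩ := UT_nilpotent t
  rcases lt_or_ge s.1 1 with h1 | h1
  · have hs0 : s.1 = 0 := by omega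
    have hv : vT s.1 = 1 := if_pos hs
    have hh : hT s.1 = 1 := by rw [hT, if_pos hs, hs0]; simp
    have key : DFinsupp.single s t
        = Dpos n i (DFinsupp.single s t) - DFinsupp.single (idxAdd n i s) t := by
      simp only [Dpos_single, hv, hh, AddMonoid.End.one_apply]
      rw [add_sub_cancel_right]
    rw [key]
    refine sub_mem (AddMonoidHom.mem_range.mpr ⟨_, rfl⟩)
      (mem_range_pos n i hn N (idxAdd n i s) t ?_ (hN N le_rfl))
    show 1 ≤ s.1 + n
    omega
  · exact mem_range_pos n i hn N s t h1 (hN N le_rfl)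

lemma mem_range_all (n i : ℤ) (hn : 0 < n) (k : ℕ) :
    ∀ (s : Idx n i) (t : TT), -s.1 ≤ k → DFinsupp.single s t ∈ (Dpos n i).range := by
  induction k with
  | zero =>
    intro s t h
    exact mem_range_nonneg n i hn s t (by simpa using h)
  | succ k ih =>
    intro s t h
    rcases le_or_gt 0 s.1 with hs | hs
    · exact mem_range_nonneg n i hn s t hs
    · have hv : vT s.1 = UT ^ (-s.1).toNat := if_neg (not_le.mpr hs)
      have hh : hT s.1 = 1 := if_neg (not_le.mpr hs)
      obtain ⟨a, ha⟩ := UTpow_surj (-s.1).toNat t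
      have key : DFinsupp.single s t
          = Dpos n i (DFinsupp.single s a) - DFinsupp.single (idxAdd n i s) a := by
        rw [Dpos_single, hv, hh, ha, AddMonoid.End.one_apply, add_sub_cancel_right]
      rw [key]
      refine sub_mem (AddMonoidHom.mem_range.mpr ⟨_, rfl⟩) (ih (idxAdd n i s) a ?_)
      show -(s.1 + n) ≤ (k : ℤ)
      have : -s.1 ≤ (k : ℤ) + 1 := by exact_mod_cast h
      omega

/-- For every positive `n` and every `i`, the map `D⁺_{n,i} : 𝔸⁺_i → 𝔹⁺_i` is surjective
(so the homology of its mapping cone is the kernel of `D⁺_{n,i}`). -/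
theorem stmt3 (n i : ℤ) (hn : 0 < n) : Function.Surjective (Dpos n i) := by
  intro b
  suffices h : b ∈ (Dpos n i).range from AddMonoidHom.mem_range.mp h
  induction b using DFinsupp.induction with
  | h0 => exact zero_mem _
  | ha s t f _ _ ih =>
    exact add_mem (mem_range_all n i hn (-s.1).toNat s t (Int.self_le_toNat _)) ih
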